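/- Let X and Y be positive semidefinite n×n complex matrices. If X + Y and X − Y have the same singular values (with multiplicity), then XY = 0. -/

import Mathlib

open ComplexOrder Matrix

namespace Matrix.PosSemidef

open scoped MatrixOrder

noncomputable def sqrt {m : ℕ} {X : Matrix (Fin m) (Fin m) ℂ} (_ : X.PosSemidef) :
    Matrix (Fin m) (Fin m) ℂ := CFC.sqrt X

lemma posSemidef_sqrt {m : ℕ} {X : Matrix (Fin m) (Fin m) ℂ} (hX : X.PosSemidef) :
    hX.sqrt.PosSemidef := (CFC.sqrt_nonneg X).posSemidef

lemma sqrt_mul_self {m : ℕ} {X : Matrix (Fin m) (Fin m) ℂ} (hX : X.PosSemidef) :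
    hX.sqrt * hX.sqrt = X := CFC.sqrt_mul_sqrt_self X hX.nonneg

end Matrix.PosSemidef

lemma trace_sq_eq {m : ℕ} {A : Matrix (Fin m) (Fin m) ℂ} (hA : A.IsHermitian) :
    (A * A).trace = ∑ i, ((hA.eigenvalues i : ℂ))^2 := by
  conv_lhs => rw [hA.spectral_theorem]
  simp only [Unitary.conjStarAlgAut_apply, Unitary.coe_star]
  set U := (hA.eigenvectorUnitary : Matrix (Fin m) (Fin m) ℂ)
  set D := diagonal (RCLike.ofReal ∘ hA.eigenvalues : Fin m → ℂ)
  have hU : star U * U = 1 := (Matrix.mem_unitaryGroup_iff').mp hA.eigenvectorUnitary.2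
  have key : U * D * star U * (U * D * star U) = U * (D * D) * star U := by
    calc U * D * star U * (U * D * star U)
        = U * D * (star U * U) * (D * star U) := by noncomm_ring
      _ = U * (D * D) * star U := by rw [hU]; noncomm_ring
  rw [key, Matrix.trace_mul_comm, ← mul_assoc, hU, one_mul, Matrix.diagonal_mul_diagonal,
    Matrix.trace_diagonal]
  simp [pow_two]

lemma trace_zero_of_psd {m : ℕ} {X Y : Matrix (Fin m) (Fin m) ℂ}
    (hX : X.PosSemidef) (hY : Y.PosSemidef) (h : (X * Y).trace = 0) : X * Y = 0 := by
  set B := hX.sqrt * hY.sqrt with hB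
  have hBH : Bᴴ = hY.sqrt * hX.sqrt := by
    rw [hB, Matrix.conjTranspose_mul, hX.posSemidef_sqrt.1.eq, hY.posSemidef_sqrt.1.eq]
  have habs : Bᴴ * B = hY.sqrt * X * hY.sqrt := by
    rw [hBH, hB]
    calc hY.sqrt * hX.sqrt * (hX.sqrt * hY.sqrt)
        = hY.sqrt * (hX.sqrt * hX.sqrt) * hY.sqrt := by noncomm_ring
      _ = hY.sqrt * X * hY.sqrt := by rw [hX.sqrt_mul_self]
  have htr : (Bᴴ * B).trace = 0 := by
    rw [habs, Matrix.trace_mul_comm, ← mul_assoc, hY.sqrt_mul_self, Matrix.trace_mul_comm]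
    exact h
  have hB0 : B = 0 := by
    have hsum : ∑ j, ∑ i, Complex.normSq (B i j) = 0 := by
      have := congrArg Complex.re htr
      simpa [Matrix.trace, Matrix.mul_apply, Matrix.diag, Complex.normSq_eq_conj_mul_self,
        Complex.re_sum, Complex.normSq_apply] using this
    ext i j
    have hj := (Finset.sum_eq_zero_iff_of_nonneg (fun j _ => Finset.sum_nonneg
      (fun i _ => Complex.normSq_nonneg _))).mp hsum j (Finset.mem_univ j)
    have hi := (Finset.sum_eq_zero_iff_of_nonneg (fun i _ => Complex.normSq_nonneg _)).mp hj i
      (Finset.mem_univ i)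
    simpa using Complex.normSq_eq_zero.mp hi
  have hXY : hX.sqrt * B * hY.sqrt = X * Y := by
    rw [hB]
    calc hX.sqrt * (hX.sqrt * hY.sqrt) * hY.sqrt
        = (hX.sqrt * hX.sqrt) * (hY.sqrt * hY.sqrt) := by noncomm_ring
      _ = X * Y := by rw [hX.sqrt_mul_self, hY.sqrt_mul_self]
  rw [← hXY, hB0, Matrix.mul_zero, Matrix.zero_mul]

theorem stmt_7 {n : ℕ} (X Y : Matrix (Fin n) (Fin n) ℂ)
    (hX : X.PosSemidef) (hY : Y.PosSemidef)
    (hsub : (X - Y).IsHermitian) (hadd : (X + Y).IsHermitian)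
    (heig : ∃ σ : Equiv.Perm (Fin n),
      ∀ i, |hsub.eigenvalues i| = hadd.eigenvalues (σ i)) :
    X * Y = 0 := by
  obtain ⟨σ, hσ⟩ := heig
  have htr : ((X - Y) * (X - Y)).trace = ((X + Y) * (X + Y)).trace := by
    rw [trace_sq_eq hsub, trace_sq_eq hadd]
    rw [← Equiv.sum_comp σ (fun i => ((hadd.eigenvalues i : ℂ))^2)]
    congr 1; ext i
    have h2 : (hsub.eigenvalues i)^2 = (hadd.eigenvalues (σ i))^2 := by
      rw [← hσ i, sq_abs]
    exact_mod_cast congrArg Complex.ofReal h2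
  have h2 : (X * Y).trace + (Y * X).trace = 0 := by
    have e1 : (X - Y) * (X - Y) = X*X - X*Y - Y*X + Y*Y := by noncomm_ring
    have e2 : (X + Y) * (X + Y) = X*X + X*Y + Y*X + Y*Y := by noncomm_ring
    rw [e1, e2] at htr
    simp only [Matrix.trace_add, Matrix.trace_sub] at htr
    linear_combination -htr/2
  have h3 : (X * Y).trace = 0 := by
    rw [Matrix.trace_mul_comm Y X] at h2
    linear_combination h2/2
  exact trace_zero_of_psd hX hY h3
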